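/- arXiv:2203.02037 — 8 statements merged into one kernel-verified Lean document; each statement's English description precedes it below -/
import Mathlib

section
/- In the free group FreeGroup α on any type α, no nontrivial element is conjugate to its own inverse: if g : FreeGroup α and g ≠ 1, then ¬ IsConj g g⁻¹. -/
namespace FGConjAux

open FreeGroup List

set_option linter.unusedSectionVars false

variable {α : Type*} [DecidableEq α]

/-- adjacent pair does not cancel -/
def R (p q : α × Bool) : Prop := ¬(p.1 = q.1 ∧ p.2 = !q.2)

lemma reduce_length_le (L : List (α × Bool)) : (reduce L).length ≤ L.length :=
  (FreeGroup.reduce.red).length_le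

lemma reduce_eq_self_iff (L : List (α × Bool)) : reduce L = L ↔ List.Chain' R L := by
  induction L with
  | nil => simp [List.Chain']
  | cons p T ih =>
    rw [FreeGroup.reduce.cons]
    cases hT : reduce T with
    | nil =>
      dsimp only
      constructor
      · intro h
        obtain rfl : T = [] := by
          have := h.symm
          exact ((List.cons.injEq _ _ _ _ ▸ this).2)
        exact List.isChain_singleton _
      · intro h
        have hTT : T = [] := ((ih.mpr h.tail).symm.trans hT)
        rw [hTT]
    | cons q M =>
      dsimp only
      by_cases hc : p.1 = q.1 ∧ p.2 = !q.2
      · rw [if_pos hc]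
        constructor
        · intro h
          exfalso
          have h1 : (q :: M).length ≤ T.length := hT ▸ reduce_length_le T
          have h2 : M.length = T.length + 1 := by rw [h]; simp
          simp at h1; omega
        · intro h
          exfalso
          have hTT : T = q :: M := ((ih.mpr h.tail).symm.trans hT)
          subst hTT
          exact (List.isChain_cons_cons.mp h).1 hc
      · rw [if_neg hc]
        constructor
        · intro h
          have hT' : T = q :: M := ((List.cons.injEq _ _ _ _ ▸ h).2).symm
          subst hT'
          exact List.isChain_cons_cons.mpr ⟨hc, ih.mp hT⟩
        · intro h
          have hTT : T = q :: M := ((ih.mpr h.tail).symm.trans hT)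
          rw [hTT]

lemma chain'_toWord (g : FreeGroup α) : List.Chain' R g.toWord :=
  (reduce_eq_self_iff _).mp (reduce_toWord g)

lemma toWord_mk_self {L : List (α × Bool)} (h : List.Chain' R L) : (mk L).toWord = L := by
  rw [toWord_mk, (reduce_eq_self_iff L).mpr h]

lemma mk_letter_cancel (a : α) (b : Bool) :
    (mk [(a, b)] : FreeGroup α) * mk [(a, !b)] = 1 := by
  rw [FreeGroup.mul_mk, FreeGroup.one_eq_mk]
  exact Quot.sound Red.Step.cons_not

lemma mk_letter_cancel' (a : α) (b : Bool) :
    (mk [(a, !b)] : FreeGroup α) * mk [(a, b)] = 1 := by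
  have := mk_letter_cancel a (!b); rwa [Bool.not_not] at this

lemma inv_mk_letter (a : α) (b : Bool) :
    (mk [(a, b)] : FreeGroup α)⁻¹ = mk [(a, !b)] := by
  rw [FreeGroup.inv_mk]; rfl

/-- cyclically reduced (no cancellation between last and first letter) -/
def Cyc (L : List (α × Bool)) : Prop := ∀ x ∈ L.head?, ∀ y ∈ L.getLast?, R y x

lemma rotate_of_conj :
    ∀ n (c g h : FreeGroup α), c.toWord.length = n →
      Cyc g.toWord → Cyc h.toWord → c * g * c⁻¹ = h →
      ∃ k, h.toWord = g.toWord.rotate k := by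
  intro n
  induction n using Nat.strong_induction_on with
  | _ n IH =>
  intro c g h hn hg hh hconj
  rcases Nat.eq_zero_or_pos n with rfl | hpos
  · have hc1 : c = 1 := by
      rw [← FreeGroup.toWord_eq_nil_iff]
      exact List.eq_nil_of_length_eq_zero hn
    subst hc1
    refine ⟨0, ?_⟩
    rw [List.rotate_zero]
    rw [one_mul, inv_one, mul_one] at hconj
    rw [hconj]
  by_cases hLnil : g.toWord = []
  · have hg1 : g = 1 := FreeGroup.toWord_eq_nil_iff.mp hLnil
    have hh1 : h = 1 := by rw [← hconj, hg1]; group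
    exact ⟨0, by rw [List.rotate_zero, hg1, hh1]⟩
  -- main case
  set K := c.toWord with hKdef
  set L := g.toWord with hLdef
  have hKne : K ≠ [] := by
    intro h0; rw [h0] at hn; simp at hn; omega
  obtain ⟨K', z, hK⟩ := (List.eq_nil_or_concat K).resolve_left hKne
  rw [List.concat_eq_append] at hK
  obtain ⟨x₀, T, hL⟩ := List.exists_cons_of_ne_nil hLnil
  have hredL : List.Chain' R L := chain'_toWord g
  have hredK : List.Chain' R K := chain'_toWord c
  have hcK : c = mk K := FreeGroup.mk_toWord.symm
  have hgL : g = mk L := FreeGroup.mk_toWord.symm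
  have hredK' : List.Chain' R K' := hredK.prefix ⟨[z], hK.symm⟩
  have hK'len : K'.length + 1 = n := by rw [← hn, hK]; simp
  have hcsplit : c = mk K' * mk [z] := by rw [hcK, hK, ← FreeGroup.mul_mk]
  set y₀ := L.getLast hLnil with hy₀def
  have hy₀ : L.getLast? = some y₀ := List.getLast?_eq_getLast hLnil
  have hx₀ : L.head? = some x₀ := by rw [hL]; rfl
  by_cases hz1 : z.1 = x₀.1 ∧ z.2 = !x₀.2
  · -- z cancels the first letter of L
    have hzval : z = (x₀.1, !x₀.2) := Prod.ext_iff.mpr hz1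
    have hz0 : (mk [z] : FreeGroup α) * mk [x₀] = 1 := by
      rw [hzval]; exact mk_letter_cancel' x₀.1 x₀.2
    have hc'eq : c * mk [x₀] = mk K' := by
      rw [hcsplit, mul_assoc, hz0, mul_one]
    have hgsplit : g = mk [x₀] * mk T := by
      rw [hgL, hL, FreeGroup.mul_mk]; rfl
    have hg'eq : (mk [x₀] : FreeGroup α)⁻¹ * g * mk [x₀] = mk (T ++ [x₀]) := by
      rw [hgsplit, ← FreeGroup.mul_mk]; group
    have hchainT : List.Chain' R T := by rw [hL] at hredL; exact hredL.tail
    have hchain : List.Chain' R (T ++ [x₀]) := by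
      rw [List.Chain', List.isChain_append]
      refine ⟨hchainT, List.isChain_singleton _, ?_⟩
      intro y hy x hx
      obtain rfl : x₀ = x := by simpa using hx
      have hTne : T ≠ [] := by rintro rfl; simp at hy
      have hyL : L.getLast? = some y := by
        rw [hL, show (x₀ :: T) = [x₀] ++ T from rfl, List.getLast?_append, hy]
        rfl
      exact hg x₀ hx₀ y hyL
    have hcyc' : Cyc (T ++ [x₀]) := by
      intro x hx y hy
      obtain rfl : x₀ = y := by rw [List.getLast?_concat] at hy; simpa using hy
      cases hT : T with
      | nil =>
        subst hT
        obtain rfl : x₀ = x := by simpa using hx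
        simp [R]
      | cons q T' =>
        obtain rfl : q = x := by
          subst hT; simpa using hx
        rw [hL, hT] at hredL
        exact (List.isChain_cons_cons.mp hredL).1
    have hconj' : (c * mk [x₀]) * ((mk [x₀] : FreeGroup α)⁻¹ * g * mk [x₀]) *
        (c * mk [x₀])⁻¹ = h := by
      rw [← hconj]; group
    obtain ⟨k, hk⟩ := IH K'.length (by omega) (c * mk [x₀])
      ((mk [x₀] : FreeGroup α)⁻¹ * g * mk [x₀]) h
      (by rw [hc'eq, toWord_mk_self hredK'])
      (by rw [hg'eq, toWord_mk_self hchain]; exact hcyc')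
      hh hconj'
    rw [hg'eq, toWord_mk_self hchain] at hk
    have hrot : L.rotate 1 = T ++ [x₀] := by
      rw [hL]
      have := List.rotate_cons_succ T x₀ 0
      rwa [List.rotate_zero] at this
    exact ⟨1 + k, by rw [← List.rotate_rotate, hrot, hk]⟩
  · by_cases hz2 : z = y₀
    · -- z cancels the last letter of L
      obtain ⟨L₀, hLsplit⟩ : ∃ L₀, L₀ ++ [y₀] = L :=
        ⟨L.dropLast, List.dropLast_append_getLast hLnil⟩
      have hc''eq : c * (mk [y₀] : FreeGroup α)⁻¹ = mk K' := by
        rw [hcsplit, hz2, mul_assoc, mul_inv_cancel, mul_one]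
      have hgsplit : g = mk L₀ * mk [y₀] := by
        rw [hgL, ← hLsplit, FreeGroup.mul_mk]
      have hg''eq : (mk [y₀] : FreeGroup α) * g * (mk [y₀] : FreeGroup α)⁻¹ =
          mk (y₀ :: L₀) := by
        rw [hgsplit, show (y₀ :: L₀) = [y₀] ++ L₀ from rfl, ← FreeGroup.mul_mk]; group
      have hchainL₀ : List.Chain' R L₀ := hredL.prefix ⟨[y₀], hLsplit⟩
      have hchain : List.Chain' R (y₀ :: L₀) := by
        rw [List.Chain', List.isChain_cons]
        refine ⟨?_, hchainL₀⟩
        intro q hq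
        have hL₀ne : L₀ ≠ [] := by rintro rfl; simp at hq
        obtain rfl : x₀ = q := by
          have h2 : L.head? = some q := by
            rw [← hLsplit, List.head?_append, hq]; rfl
          rw [hx₀] at h2; simpa using h2
        exact hg x₀ hx₀ y₀ hy₀
      have hcyc'' : Cyc (y₀ :: L₀) := by
        intro x hx y hy
        obtain rfl : y₀ = x := by simpa using hx
        cases hL₀ : L₀ with
        | nil =>
          subst hL₀
          obtain rfl : y₀ = y := by simpa using hy
          simp [R]
        | cons q T' =>
          have hyL₀ : L₀.getLast? = some y := by
            rw [hL₀]
            rw [hL₀] at hy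
            simpa using hy
          rw [← hLsplit, List.Chain', List.isChain_append] at hredL
          exact hredL.2.2 y hyL₀ y₀ rfl
      have hconj'' : (c * (mk [y₀] : FreeGroup α)⁻¹) *
          ((mk [y₀] : FreeGroup α) * g * (mk [y₀] : FreeGroup α)⁻¹) *
          (c * (mk [y₀] : FreeGroup α)⁻¹)⁻¹ = h := by
        rw [← hconj]; group
      obtain ⟨k, hk⟩ := IH K'.length (by omega) (c * (mk [y₀] : FreeGroup α)⁻¹)
        ((mk [y₀] : FreeGroup α) * g * (mk [y₀] : FreeGroup α)⁻¹) h
        (by rw [hc''eq, toWord_mk_self hredK'])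
        (by rw [hg''eq, toWord_mk_self hchain]; exact hcyc'')
        hh hconj''
      rw [hg''eq, toWord_mk_self hchain] at hk
      have hrot : L.rotate L₀.length = y₀ :: L₀ := by
        rw [← hLsplit, List.rotate_eq_drop_append_take (by simp),
          List.drop_left, List.take_left]
        rfl
      exact ⟨L₀.length + k, by rw [← List.rotate_rotate, hrot, hk]⟩
    · -- no cancellation: contradiction with h cyclically reduced
      exfalso
      have hWeq : h = mk (K ++ (L ++ invRev K)) := by
        rw [← hconj, hcK, hgL, FreeGroup.inv_mk, FreeGroup.mul_mk, FreeGroup.mul_mk,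
          List.append_assoc]
      have hchainInv : List.Chain' R (invRev K) := by
        rw [← reduce_eq_self_iff, FreeGroup.reduce_invRev,
          (reduce_eq_self_iff K).mpr hredK]
      have hinvK : invRev K = (z.1, !z.2) :: invRev K' := by
        rw [hK]; simp [FreeGroup.invRev]
      have hKlast : K.getLast? = some z := by rw [hK, List.getLast?_concat]
      have hchainW : List.Chain' R (K ++ (L ++ invRev K)) := by
        rw [List.Chain', List.isChain_append]
        refine ⟨hredK, ?_, ?_⟩
        · rw [List.isChain_append]
          refine ⟨hredL, hchainInv, ?_⟩
          intro a ha b hb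
          obtain rfl : y₀ = a := by rw [hy₀] at ha; simpa using ha
          obtain rfl : (z.1, !z.2) = b := by rw [hinvK] at hb; simpa using hb
          intro ⟨e1, e2⟩
          rw [Bool.not_not] at e2
          exact hz2 (Prod.ext_iff.mpr ⟨e1.symm, e2.symm⟩)
        · intro a ha b hb
          obtain rfl : z = a := by rw [hKlast] at ha; simpa using ha
          obtain rfl : x₀ = b := by
            rw [List.head?_append, hx₀] at hb; simpa using hb
          exact hz1
      have hhW : h.toWord = K ++ (L ++ invRev K) := by
        rw [hWeq, toWord_mk_self hchainW]
      obtain ⟨k₀, K₁, hKc⟩ := List.exists_cons_of_ne_nil hKne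
      have hheadW : h.toWord.head? = some k₀ := by
        rw [hhW, List.head?_append, hKc]; rfl
      have h1 : (invRev K).getLast? = some (k₀.1, !k₀.2) := by
        rw [FreeGroup.invRev, List.getLast?_reverse, List.head?_map, hKc]
        rfl
      have hlastW : h.toWord.getLast? = some (k₀.1, !k₀.2) := by
        rw [hhW, List.getLast?_append, List.getLast?_append, h1]
        rfl
      exact hh k₀ hheadW (k₀.1, !k₀.2) hlastW ⟨rfl, rfl⟩

lemma getElem_idx_congr {β : Type*} (l : List β) {i j : ℕ} (h : i = j) (hi : i < l.length) :
    l[i]'hi = l[j]'(h ▸ hi) := by subst h; rfl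

lemma invRev_ne_self {v : List (α × Bool)} (hch : List.Chain' R v) (hne : v ≠ []) :
    invRev v ≠ v := by
  intro hEq
  have hlen : 0 < v.length := List.length_pos_iff.mpr hne
  have hget : ∀ i j (hi : i < v.length) (hj : j < v.length), i + j + 1 = v.length →
      v[i]'hi = ((v[j]'hj).1, !(v[j]'hj).2) := by
    intro i j hi hj hij
    have h0 : (invRev v)[i]? = v[i]? := by rw [hEq]
    rw [FreeGroup.invRev] at h0
    rw [List.getElem?_eq_getElem (by simpa using hi), List.getElem?_eq_getElem hi] at h0
    have h1 := Option.some.inj h0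
    rw [List.getElem_reverse, List.getElem_map] at h1
    have hidx : (List.map (fun g : α × Bool => (g.1, !g.2)) v).length - 1 - i = j := by
      simp; omega
    rw [getElem_idx_congr v hidx] at h1
    exact h1.symm
  rcases Nat.even_or_odd v.length with ⟨m, hm⟩ | ⟨m, hm⟩
  · -- even length 2m, adjacent middle pair cancels: contradiction with reducedness
    have hm1 : 1 ≤ m := by omega
    have h1 : m - 1 < v.length := by omega
    have h2 : m < v.length := by omega
    have hmid := hget (m - 1) m h1 h2 (by omega)
    have hchain := List.isChain_iff_getElem.mp hch (m - 1) (by omega)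
    apply hchain
    have e : m - 1 + 1 = m := by omega
    simp only [List.get_eq_getElem, getElem_idx_congr v e, hmid]
    exact ⟨trivial, trivial⟩
  · -- odd length 2m+1, middle letter is its own inverse: absurd
    have h2 : m < v.length := by omega
    have hmid := hget m m h2 h2 (by omega)
    have := congrArg Prod.snd hmid
    simp at this

lemma key : ∀ n (g : FreeGroup α), g.toWord.length = n → g ≠ 1 → ¬ IsConj g g⁻¹ := by
  intro n
  induction n using Nat.strong_induction_on with
  | _ n IH =>
  intro g hn hg1 hconj
  obtain ⟨c, hc'⟩ := isConj_iff.mp hconj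
  set L := g.toWord with hLdef
  have hLne : L ≠ [] := fun h0 => hg1 (FreeGroup.toWord_eq_nil_iff.mp h0)
  have hchainL : List.Chain' R L := chain'_toWord g
  obtain ⟨x₀, T, hL⟩ := List.exists_cons_of_ne_nil hLne
  have hx₀ : L.head? = some x₀ := by rw [hL]; rfl
  set y₀ := L.getLast hLne with hy₀def
  have hy₀ : L.getLast? = some y₀ := List.getLast?_eq_getLast hLne
  by_cases hcyc : Cyc L
  · -- cyclically reduced case
    have hcycInv : Cyc g⁻¹.toWord := by
      rw [FreeGroup.toWord_inv]
      intro x hx y hy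
      obtain rfl : (y₀.1, !y₀.2) = x := by
        have : (invRev L).head? = some (y₀.1, !y₀.2) := by
          rw [FreeGroup.invRev, List.head?_reverse, List.getLast?_map, hy₀]
          rfl
        rw [this] at hx; simpa using hx
      obtain rfl : (x₀.1, !x₀.2) = y := by
        have : (invRev L).getLast? = some (x₀.1, !x₀.2) := by
          rw [FreeGroup.invRev, List.getLast?_reverse, List.head?_map, hx₀]
          rfl
        rw [this] at hy; simpa using hy
      intro ⟨e1, e2⟩
      rw [Bool.not_not] at e2
      exact hcyc x₀ hx₀ y₀ hy₀ ⟨e1.symm, e2.symm⟩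
    obtain ⟨k, hk⟩ := rotate_of_conj c.toWord.length c g g⁻¹ rfl hcyc hcycInv hc'
    rw [FreeGroup.toWord_inv] at hk
    set m := k % L.length with hmdef
    have hm : L.rotate k = L.drop m ++ L.take m := by
      rw [← List.rotate_mod]
      exact List.rotate_eq_drop_append_take (le_of_lt (Nat.mod_lt _ (List.length_pos_iff.mpr hLne)))
    have hL' : L.take m ++ L.drop m = L := List.take_append_drop m L
    have hEq : invRev (L.take m ++ L.drop m) = L.drop m ++ L.take m := by
      rw [hL']
      show invRev g.toWord = _
      rw [hk]
      exact hm
    have hinv_app : invRev (L.take m ++ L.drop m) =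
        invRev (L.drop m) ++ invRev (L.take m) := by
      simp [FreeGroup.invRev]
    rw [hinv_app] at hEq
    obtain ⟨hvv, huu⟩ := List.append_inj hEq (by simp [FreeGroup.invRev_length])
    rcases eq_or_ne (L.drop m) [] with hv | hv
    · have hu : L.take m = L := by
        conv_rhs => rw [← hL']
        rw [hv, List.append_nil]
      exact invRev_ne_self (hchainL.prefix ⟨L.drop m, hL'⟩) (by rw [hu]; exact hLne) huu
    · exact invRev_ne_self (hchainL.suffix ⟨L.take m, hL'⟩) hv hvv
  · -- not cyclically reduced: peel off first/last letters and induct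
    have hbad : y₀.1 = x₀.1 ∧ y₀.2 = !x₀.2 := by
      by_contra hb
      apply hcyc
      intro x hx y hy
      obtain rfl : x₀ = x := by rw [hx₀] at hx; simpa using hx
      obtain rfl : y₀ = y := by rw [hy₀] at hy; simpa using hy
      exact hb
    have hy₀val : y₀ = (x₀.1, !x₀.2) := Prod.ext_iff.mpr hbad
    have hTlast : T.getLast? = some y₀ := by
      have hTne : T ≠ [] := by
        rintro rfl
        have : y₀ = x₀ := by
          rw [hL] at hy₀
          simpa using hy₀.symm
        rw [this] at hbad
        simp at hbad
      have : L.getLast? = T.getLast? := by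
        rw [hL, show (x₀ :: T) = [x₀] ++ T from rfl, List.getLast?_append,
          List.getLast?_eq_getLast hTne]
        rfl
      rw [← this, hy₀]
    obtain ⟨T₀, hT⟩ := List.getLast?_eq_some_iff.mp hTlast
    have hLsplit : L = x₀ :: (T₀ ++ [y₀]) := by rw [hL, hT]
    have hchainT₀ : List.Chain' R T₀ := by
      refine hchainL.infix ⟨[x₀], [y₀], ?_⟩
      rw [hLsplit]; simp
    have hT₀ne : T₀ ≠ [] := by
      rintro rfl
      rw [hLsplit] at hchainL
      simp only [List.nil_append] at hchainL
      have := (List.isChain_cons_cons.mp hchainL).1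
      exact this ⟨hbad.1.symm, by rw [hbad.2, Bool.not_not]⟩
    have hgsplit : g = mk [x₀] * mk T₀ * mk [y₀] := by
      conv_lhs => rw [← FreeGroup.mk_toWord (x := g)]
      rw [FreeGroup.mul_mk, FreeGroup.mul_mk, ← hLdef, hLsplit]
      rfl
    have hy₀x : (mk [y₀] : FreeGroup α) = (mk [x₀])⁻¹ := by
      rw [inv_mk_letter, hy₀val]
    have hg0 : (mk [x₀] : FreeGroup α)⁻¹ * g * mk [x₀] = mk T₀ := by
      rw [hgsplit, hy₀x]; group
    have hword : ((mk [x₀] : FreeGroup α)⁻¹ * g * mk [x₀]).toWord = T₀ := by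
      rw [hg0, toWord_mk_self hchainT₀]
    have hlen : T₀.length < n := by
      rw [← hn]
      have := congrArg List.length hLsplit
      simp at this
      omega
    have hne1 : (mk [x₀] : FreeGroup α)⁻¹ * g * mk [x₀] ≠ 1 := by
      rw [hg0]
      intro h0
      apply hT₀ne
      have := congrArg FreeGroup.toWord h0
      rwa [toWord_mk_self hchainT₀, FreeGroup.toWord_one] at this
    refine IH T₀.length hlen _ (by rw [hword]) hne1 ?_
    refine isConj_iff.mpr ⟨(mk [x₀])⁻¹ * c * mk [x₀], ?_⟩
    have e1 : ((mk [x₀] : FreeGroup α)⁻¹ * c * mk [x₀]) *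
        ((mk [x₀] : FreeGroup α)⁻¹ * g * mk [x₀]) *
        ((mk [x₀] : FreeGroup α)⁻¹ * c * mk [x₀])⁻¹ =
        (mk [x₀] : FreeGroup α)⁻¹ * (c * g * c⁻¹) * mk [x₀] := by group
    have e2 : (mk [x₀] : FreeGroup α)⁻¹ * g⁻¹ * mk [x₀] =
        ((mk [x₀] : FreeGroup α)⁻¹ * g * mk [x₀])⁻¹ := by group
    rw [e1, hc']
    exact e2

end FGConjAux

/-- In a free group, no nontrivial element is conjugate to its own inverse. -/
theorem freeGroup_not_isConj_inv {α : Type*} (g : FreeGroup α) (hg : g ≠ 1) :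
    ¬ IsConj g g⁻¹ := by
  classical
  exact FGConjAux.key _ g rfl hg
end

section
/- Let w be a nonempty cyclically reduced word over an alphabet α. Then no rotation of w equals the formal inverse of w: if w = r ++ s then s ++ r ≠ w⁻¹. -/
/-- A word over `α` is reduced if it has no two adjacent letters `(x, b)`, `(x, ¬b)`. -/
def Reduced {α : Type*} (w : List (α × Bool)) : Prop :=
  List.Chain' (fun a b => ¬ (a.1 = b.1 ∧ b.2 = !a.2)) w

/-- A word is cyclically reduced if it is reduced and, when nonempty, its last letter and
first letter are not of the form `(x, b)`, `(x, ¬b)`. -/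
def CyclicallyReduced {α : Type*} (w : List (α × Bool)) : Prop :=
  Reduced w ∧ ∀ a ∈ w.getLast?, ∀ b ∈ w.head?, ¬ (a.1 = b.1 ∧ b.2 = !a.2)

lemma invRev_concat {α : Type*} (a b : α × Bool) (m : List (α × Bool)) :
    FreeGroup.invRev (a :: (m ++ [b])) =
      (b.1, !b.2) :: (FreeGroup.invRev m ++ [(a.1, !a.2)]) := by
  simp [FreeGroup.invRev]

lemma reduced_ne_invRev {α : Type*} :
    ∀ n (l : List (α × Bool)), l.length = n → Reduced l → l ≠ [] →
      l ≠ FreeGroup.invRev l := by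
  intro n
  induction n using Nat.strong_induction_on with
  | _ n ih =>
    rintro l rfl hl hne heq
    obtain ⟨a, t, rfl⟩ := List.exists_cons_of_ne_nil hne
    rcases t.eq_nil_or_concat with rfl | ⟨m, b, rfl⟩
    · simp [FreeGroup.invRev] at heq
      have := congrArg Prod.snd heq
      simp at this
    · rw [List.concat_eq_append] at heq hl ih
      rw [invRev_concat] at heq
      obtain ⟨ha, hrest⟩ := List.cons_eq_cons.mp heq
      have hlen : m.length = (FreeGroup.invRev m).length :=
        (FreeGroup.invRev_length).symm
      obtain ⟨hm, hb⟩ := List.append_inj hrest hlen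
      rcases m.eq_nil_or_concat with rfl | hmne
      · -- l = [a, b], a = (b.1, !b.2)
        have := List.isChain_cons_cons.mp hl
        apply this.1
        constructor
        · rw [ha]
        · rw [ha]; simp
      · have hmne' : m ≠ [] := by rcases hmne with ⟨x, y, rfl⟩; simp
        have hmr : Reduced m := by
          apply List.IsChain.infix hl
          exact ⟨[a], [b], by simp⟩
        exact ih m.length (by simp) m rfl hmr hmne' hm

/-- No rotation of a nonempty cyclically reduced word equals its formal inverse. -/
theorem rotation_ne_invRev {α : Type*} (w : List (α × Bool))
    (hw : CyclicallyReduced w) (hne : w ≠ [])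
    (r s : List (α × Bool)) (h : w = r ++ s) :
    s ++ r ≠ FreeGroup.invRev w := by
  intro heq
  have hinv : FreeGroup.invRev w = FreeGroup.invRev s ++ FreeGroup.invRev r := by
    rw [h, FreeGroup.invRev]; simp [FreeGroup.invRev]
  rw [hinv] at heq
  have hlen : s.length = (FreeGroup.invRev s).length := FreeGroup.invRev_length.symm
  obtain ⟨hs, hr⟩ := List.append_inj heq hlen
  rcases eq_or_ne s [] with rfl | hsne
  · have hrw : w = r := by simpa using h
    exact reduced_ne_invRev w.length w rfl hw.1 hne (by rw [hrw]; exact hr)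
  · have hsr : Reduced s := hw.1.suffix ⟨r, h.symm⟩
    exact reduced_ne_invRev s.length s rfl hsr hsne hs
end

section
/- Let g and h be elements of the free group FreeGroup α whose reduced words are cyclically reduced. Then g and h are conjugate (IsConj g h) if and only if the reduced word of h is a rotation of the reduced word of g. -/
namespace IsConjRotAux
open FreeGroup
variable {α : Type*} [DecidableEq α]

omit [DecidableEq α] in
lemma exists_cancel_of_not_reduced {w : List (α × Bool)} (h : ¬ Reduced w) :
    ∃ (L₁ : List (α × Bool)) (x : α) (b : Bool) (L₂ : List (α × Bool)),
      w = L₁ ++ (x, b) :: (x, !b) :: L₂ := by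
  induction w with
  | nil => exact absurd List.isChain_nil h
  | cons a t ih =>
    match t, h with
    | [], h => exact absurd (List.isChain_singleton a) h
    | b :: t, h =>
      rw [Reduced, List.Chain', List.isChain_cons_cons] at h
      by_cases hab : (a.1 = b.1 ∧ b.2 = !a.2)
      · refine ⟨[], a.1, a.2, t, ?_⟩
        have hb : b = (a.1, !a.2) := by
          rcases hab with ⟨h1, h2⟩; ext <;> simp [h1.symm, h2]
        simp [hb]
      · have ht : ¬ Reduced (b :: t) := fun hr => h ⟨hab, hr⟩
        obtain ⟨L₁, x, c, L₂, heq⟩ := ih ht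
        exact ⟨a :: L₁, x, c, L₂, by rw [List.cons_append, ← heq]⟩

lemma reduced_toWord (x : FreeGroup α) : Reduced x.toWord := by
  by_contra h
  obtain ⟨L₁, y, b, L₂, hw⟩ := exists_cancel_of_not_reduced h
  exact reduce.not (p := False) (L₁ := x.toWord) (by rw [reduce_toWord]; exact hw)

lemma reduce_eq_self_of_reduced {w : List (α × Bool)} (h : Reduced w) : reduce w = w := by
  have hr : Red w (reduce w) := reduce.red
  rcases (Relation.ReflTransGen.cases_head hr) with heq | ⟨c, hstep, _⟩
  · exact heq.symm
  · exfalso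
    cases hstep with
    | @not L₁ L₂ x b =>
      have : List.Chain' (fun a b : α × Bool => ¬ (a.1 = b.1 ∧ b.2 = !a.2))
          [(x, b), (x, !b)] := List.IsChain.infix h ⟨L₁, L₂, by simp⟩
      simp [List.Chain', List.isChain_cons_cons] at this

lemma toWord_mk_of_reduced {w : List (α × Bool)} (h : Reduced w) : (mk w).toWord = w := by
  rw [FreeGroup.toWord_mk, reduce_eq_self_of_reduced h]

lemma mk_step (L₁ L₂ : List (α × Bool)) (x : α) (b : Bool) :
    mk (L₁ ++ (x, b) :: (x, !b) :: L₂) = mk (L₁ ++ L₂) := by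
  rw [← quot_mk_eq_mk, ← quot_mk_eq_mk]
  exact Quot.sound Red.Step.not

omit [DecidableEq α] in
lemma invRev_cons (y : α × Bool) (c : List (α × Bool)) :
    invRev (y :: c) = invRev c ++ [(y.1, !y.2)] := by
  simp [invRev]

/-- `w'` is a rotation of `w`. -/
def Rot (w w' : List (α × Bool)) : Prop := ∃ r s, w = r ++ s ∧ w' = s ++ r

omit [DecidableEq α] in
lemma rot_refl (w : List (α × Bool)) : Rot w w := ⟨w, [], by simp, by simp⟩

omit [DecidableEq α] in
lemma rot_trans {w₁ w₂ w₃ : List (α × Bool)} (h₁ : Rot w₁ w₂) (h₂ : Rot w₂ w₃) :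
    Rot w₁ w₃ := by
  obtain ⟨r₁, s₁, rfl, rfl⟩ := h₁
  obtain ⟨r₂, s₂, heq, rfl⟩ := h₂
  rcases List.append_eq_append_iff.1 heq with ⟨a, rfl, rfl⟩ | ⟨c, rfl, rfl⟩
  · exact ⟨a, s₂ ++ s₁, by simp, by simp⟩
  · exact ⟨r₁ ++ r₂, c, by simp, by simp⟩

omit [DecidableEq α] in
lemma cr_rotate_cons {a : α × Bool} {t : List (α × Bool)}
    (h : CyclicallyReduced (a :: t)) : CyclicallyReduced (t ++ [a]) := by
  obtain ⟨hred, hcyc⟩ := h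
  rw [Reduced, List.Chain', List.isChain_cons] at hred
  obtain ⟨hhead, htail⟩ := hred
  constructor
  · rw [Reduced]
    apply List.isChain_append.2
    refine ⟨htail, List.isChain_singleton a, ?_⟩
    intro x hx y hy
    simp only [List.head?_cons, Option.mem_def, Option.some.injEq] at hy
    subst hy
    have : t ≠ [] := by rintro rfl; simp at hx
    apply hcyc x
    · simp only [Option.mem_def] at hx
      exact List.mem_getLast?_cons hx
    · simp
  · intro x hx y hy
    rw [List.getLast?_concat] at hx
    simp only [Option.mem_def, Option.some.injEq] at hx
    subst hx
    rcases t with _ | ⟨b, t'⟩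
    · simp only [List.nil_append, List.head?_cons, Option.mem_def, Option.some.injEq] at hy
      subst hy
      exact hcyc a (by simp) a (by simp)
    · simp only [List.cons_append, List.head?_cons, Option.mem_def, Option.some.injEq] at hy
      subst hy
      exact hhead b (by simp)

omit [DecidableEq α] in
lemma cr_rotate_concat {a : α × Bool} {t : List (α × Bool)}
    (h : CyclicallyReduced (t ++ [a])) : CyclicallyReduced (a :: t) := by
  obtain ⟨hred, hcyc⟩ := h
  rw [Reduced, List.Chain', List.isChain_append] at hred
  obtain ⟨ht, -, hlast⟩ := hred
  constructor
  · rw [Reduced, List.Chain', List.isChain_cons]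
    refine ⟨?_, ht⟩
    intro y hy
    rcases t with _ | ⟨b, t'⟩
    · simp at hy
    · obtain rfl : b = y := by simpa using hy
      refine hcyc a ?_ b (by simp)
      rw [List.getLast?_concat]
      rfl
  · intro x hx y hy
    obtain rfl : a = y := by simpa using hy
    rcases List.eq_nil_or_concat t with rfl | ⟨t', b, rfl⟩
    · obtain rfl : a = x := by simpa using hx
      exact hcyc a (by simp) a (by simp)
    · rw [List.concat_eq_append] at hx
      have hx' : x ∈ (t' ++ [b]).getLast? := by
        have h1 : (a :: (t' ++ [b])).getLast? = (t' ++ [b]).getLast? := by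
          rw [List.getLast?_cons, List.getLast?_append_of_ne_nil _ (by simp)]
          simp [List.getLast?_concat]
        rwa [h1] at hx
      rw [List.getLast?_concat] at hx'
      obtain rfl : b = x := by simpa using hx'
      exact hlast b (by simp [List.concat_eq_append, List.getLast?_concat]) a (by simp)

lemma conj_mk (x : α × Bool) (M : List (α × Bool)) :
    mk [x] * mk M * (mk [x])⁻¹ = mk ([x] ++ M ++ [(x.1, !x.2)]) := by
  rw [inv_mk, mul_mk, mul_mk]
  congr 1

lemma step_lemma (x : α × Bool) (u : FreeGroup α) {c w' : List (α × Bool)}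
    (hcr : CyclicallyReduced w') (hu : u.toWord = c ++ w' ++ invRev c) :
    ∃ c₂ w₂, Rot w' w₂ ∧ CyclicallyReduced w₂ ∧
      (mk [x] * u * (mk [x])⁻¹).toWord = c₂ ++ w₂ ++ invRev c₂ := by
  have hred : Reduced (c ++ w' ++ invRev c) := hu ▸ reduced_toWord u
  have humk : u = mk (c ++ w' ++ invRev c) := by rw [← hu, mk_toWord]
  rcases c with _ | ⟨y, c''⟩
  · -- c = []
    simp only [invRev_empty, List.append_nil, List.nil_append] at humk hred ⊢
    rcases w' with _ | ⟨y, w''⟩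
    · -- D : u = 1
      refine ⟨[], [], rot_refl _, hcr, ?_⟩
      rw [humk, conj_mk]
      have : ([(x.1, x.2)] ++ [] ++ [(x.1, !x.2)] : List (α × Bool))
          = [] ++ (x.1, x.2) :: (x.1, !x.2) :: [] := by simp
      rw [show ([x] : List (α × Bool)) = [(x.1, x.2)] from rfl, this, mk_step]
      simp [invRev]
    · by_cases hxy : x.1 = y.1 ∧ y.2 = !x.2
      · -- C : front cancellation
        have hy : y = (x.1, !x.2) := by ext <;> simp [hxy.1.symm, hxy.2]
        refine ⟨[], w'' ++ [y], ⟨[y], w'', rfl, rfl⟩, cr_rotate_cons hcr, ?_⟩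
        rw [humk, conj_mk]
        have hli : ([x] ++ (y :: w'') ++ [(x.1, !x.2)] : List (α × Bool))
            = [] ++ (x.1, x.2) :: (x.1, !x.2) :: (w'' ++ [y]) := by
          simp [hy]
        rw [hli, mk_step]
        have hred₂ : Reduced (w'' ++ [y]) := (cr_rotate_cons hcr).1
        rw [List.nil_append, toWord_mk_of_reduced hred₂]
        simp [invRev]
      · by_cases hlast : (y :: w'').getLast (by simp) = x
        · -- E : back cancellation
          have hw : (y :: w'') = (y :: w'').dropLast ++ [x] := by
            conv_lhs => rw [← List.dropLast_append_getLast (l := y :: w'') (by simp)]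
            rw [hlast]
          set t := (y :: w'').dropLast with ht
          refine ⟨[], x :: t, ⟨t, [x], hw, rfl⟩, cr_rotate_concat (hw ▸ hcr), ?_⟩
          rw [humk, conj_mk, hw]
          have hli : ([x] ++ (t ++ [x]) ++ [(x.1, !x.2)] : List (α × Bool))
              = ((x :: t) ++ (x.1, x.2) :: (x.1, !x.2) :: []) := by simp
          rw [hli, show ((x :: t) ++ (x.1, x.2) :: (x.1, !x.2) :: [] : List (α × Bool))
              = (x :: t) ++ (x.1, x.2) :: (x.1, !x.2) :: [] from rfl, mk_step]
          have hred₂ : Reduced (x :: t) := (cr_rotate_concat (hw ▸ hcr)).1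
          rw [List.append_nil, toWord_mk_of_reduced hred₂]
          simp [invRev]
        · -- F : no cancellation, c₂ = [x]
          refine ⟨[x], y :: w'', rot_refl _, hcr, ?_⟩
          rw [humk, conj_mk]
          have hred₂ : Reduced ([x] ++ (y :: w'') ++ [(x.1, !x.2)]) := by
            rw [Reduced, List.Chain', List.append_assoc, List.singleton_append, List.isChain_cons]
            constructor
            · intro z hz
              obtain rfl : y = z := by simpa using hz
              exact hxy
            · rw [List.isChain_append]
              refine ⟨hred, List.isChain_singleton _, ?_⟩
              intro a ha b hb
              obtain rfl : (x.1, !x.2) = b := by simpa using hb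
              rintro ⟨h1, h2⟩
              apply hlast
              have ha' : (y :: w'').getLast (by simp) = a := by
                have hgl := List.getLast?_eq_getLast_of_ne_nil (l := y :: w'') (by simp)
                rw [hgl, Option.mem_def, Option.some.injEq] at ha
                exact ha
              rw [ha']
              have h2' : (!x.2) = (!a.2) := h2
              ext
              · exact h1
              · exact (Bool.not_inj h2').symm
          rw [toWord_mk_of_reduced hred₂]
          simp [invRev]
  · -- c = y :: c''
    by_cases hxy : x.1 = y.1 ∧ y.2 = !x.2
    · -- A : cancellation against conjugating prefix
      have hy : y = (x.1, !x.2) := by ext <;> simp [hxy.1.symm, hxy.2]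
      refine ⟨c'', w', rot_refl _, hcr, ?_⟩
      rw [humk, conj_mk]
      have h1 : ([x] ++ ((y :: c'') ++ w' ++ invRev (y :: c'')) ++ [(x.1, !x.2)]
          : List (α × Bool))
          = [] ++ (x.1, x.2) :: (x.1, !x.2) ::
            (c'' ++ w' ++ invRev c'' ++ (x.1, x.2) :: (x.1, !x.2) :: []) := by
        rw [invRev_cons, hy]
        simp
      rw [h1, mk_step, List.nil_append,
        show (c'' ++ w' ++ invRev c'' ++ (x.1, x.2) :: (x.1, !x.2) :: [] : List (α × Bool))
          = (c'' ++ w' ++ invRev c'') ++ (x.1, x.2) :: (x.1, !x.2) :: [] from by simp,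
        mk_step, List.append_nil]
      have hinfix : Reduced (c'' ++ w' ++ invRev c'') := by
        apply List.IsChain.infix hred
        rw [invRev_cons]
        exact ⟨[y], [(y.1, !y.2)], by simp⟩
      rw [toWord_mk_of_reduced hinfix]
    · -- B : conjugating letter survives
      refine ⟨x :: y :: c'', w', rot_refl _, hcr, ?_⟩
      rw [humk, conj_mk]
      have hred₂ : Reduced ([x] ++ ((y :: c'') ++ w' ++ invRev (y :: c'')) ++ [(x.1, !x.2)]) := by
        rw [Reduced, List.Chain', List.append_assoc, List.singleton_append, List.isChain_cons]
        constructor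
        · intro z hz
          obtain rfl : y = z := by simpa using hz
          exact hxy
        · rw [List.isChain_append]
          refine ⟨hred, List.isChain_singleton _, ?_⟩
          intro a ha b hb
          obtain rfl : (x.1, !x.2) = b := by simpa using hb
          have ha' : (y.1, !y.2) = a := by
            rw [invRev_cons] at ha
            rw [show (y :: c'') ++ w' ++ (invRev c'' ++ [(y.1, !y.2)])
                = ((y :: c'') ++ w' ++ invRev c'') ++ [(y.1, !y.2)] from by simp,
              List.getLast?_concat] at ha
            simpa using ha
          obtain rfl := ha'
          rintro ⟨h1, h2⟩
          exact hxy ⟨h1.symm, by simpa using h2.symm⟩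
      rw [toWord_mk_of_reduced hred₂]
      simp [invRev_cons]

end IsConjRotAux

namespace IsConjRotAux
open FreeGroup
variable {α : Type*} [DecidableEq α]

lemma key_lemma {w : List (α × Bool)} (hw : CyclicallyReduced w)
    (L : List (α × Bool)) :
    ∃ c₂ w₂, Rot w w₂ ∧ CyclicallyReduced w₂ ∧
      (mk L * mk w * (mk L)⁻¹).toWord = c₂ ++ w₂ ++ invRev c₂ := by
  induction L with
  | nil =>
    refine ⟨[], w, rot_refl w, hw, ?_⟩
    rw [← one_eq_mk]
    simp only [one_mul, inv_one, mul_one]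
    rw [toWord_mk_of_reduced hw.1]
    simp [invRev]
  | cons x L ih =>
    obtain ⟨c, w', hrot, hcr, hword⟩ := ih
    obtain ⟨c₂, w₂, hrot₂, hcr₂, hword₂⟩ := step_lemma x (mk L * mk w * (mk L)⁻¹) hcr hword
    refine ⟨c₂, w₂, rot_trans hrot hrot₂, hcr₂, ?_⟩
    have hsplit : mk (x :: L) = mk [x] * mk L := by rw [mul_mk]; rfl
    have hre : mk (x :: L) * mk w * (mk (x :: L))⁻¹
        = mk [x] * (mk L * mk w * (mk L)⁻¹) * (mk [x])⁻¹ := by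
      rw [hsplit]; group
    rw [hre]
    exact hword₂

end IsConjRotAux

/-- Two elements of a free group with cyclically reduced words are conjugate iff
the reduced word of one is a rotation of the reduced word of the other. -/
theorem isConj_iff_rotation {α : Type*} [DecidableEq α] (g h : FreeGroup α)
    (hg : CyclicallyReduced g.toWord) (hh : CyclicallyReduced h.toWord) :
    IsConj g h ↔ ∃ r s : List (α × Bool), g.toWord = r ++ s ∧ h.toWord = s ++ r := by
  open IsConjRotAux FreeGroup in
  constructor
  · rw [isConj_iff]
    rintro ⟨c, rfl⟩
    obtain ⟨c₂, w₂, hrot, hcr₂, hword⟩ := key_lemma hg c.toWord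
    rw [mk_toWord, mk_toWord] at hword
    rcases c₂ with _ | ⟨z, d⟩
    · simp only [invRev_empty, List.append_nil, List.nil_append] at hword
      obtain ⟨r, s, h1, h2⟩ := hrot
      exact ⟨r, s, h1, by rw [hword, h2]⟩
    · exfalso
      obtain ⟨hred, hcyc⟩ : CyclicallyReduced ((c * g * c⁻¹).toWord) :=
        ⟨reduced_toWord _, (hh : CyclicallyReduced ((c * g * c⁻¹).toWord)).2⟩
      rw [hword, IsConjRotAux.invRev_cons] at hcyc
      refine hcyc (z.1, !z.2) ?_ z ?_ ⟨rfl, by simp⟩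
      · rw [show (z :: d) ++ w₂ ++ (invRev d ++ [(z.1, !z.2)])
            = ((z :: d) ++ w₂ ++ invRev d) ++ [(z.1, !z.2)] from by simp,
          List.getLast?_concat]
        rfl
      · simp
  · rintro ⟨r, s, hgw, hhw⟩
    rw [isConj_iff]
    refine ⟨mk s, ?_⟩
    rw [mul_inv_eq_iff_eq_mul]
    have hg' : g = mk (r ++ s) := by rw [← hgw, mk_toWord]
    have hh' : h = mk (s ++ r) := by rw [← hhw, mk_toWord]
    rw [hg', hh', mul_mk, mul_mk]
    congr 1
    simp
end

section
/- Let γ be a reduced word over an alphabet α. If γ = a ++ b and the formal inverse γ⁻¹ = b ++ c for some words a, b, c, then b is empty. In other words, a reduced word and its formal inverse cannot overlap: no nonempty final segment of γ is an initial segment of γ⁻¹. -/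
/-- A reduced word and its formal inverse cannot overlap: no nonempty final segment of `γ`
is an initial segment of `γ⁻¹`. -/
theorem reduced_no_overlap_invRev {α : Type*} (γ a b c : List (α × Bool))
    (hred : Reduced γ) (h1 : γ = a ++ b) (h2 : FreeGroup.invRev γ = b ++ c) :
    b = [] := by
  subst h1
  -- invRev (a ++ b) = invRev b ++ invRev a
  have hsplit : FreeGroup.invRev (a ++ b) = FreeGroup.invRev b ++ FreeGroup.invRev a := by
    simp [FreeGroup.invRev]
  rw [hsplit] at h2
  have hlen : (FreeGroup.invRev b).length = b.length := FreeGroup.invRev_length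
  have hb : FreeGroup.invRev b = b := (List.append_inj h2 hlen).1
  -- b is reduced
  have hredb : Reduced b := (List.isChain_append.mp hred).2.1
  -- key pointwise fact
  by_contra hne
  have hn : 0 < b.length := List.length_pos_iff.mpr hne
  set n := b.length with hnd
  have key : ∀ i (hi : i < n), b.get ⟨i, hi⟩ =
      ((b.get ⟨n - 1 - i, by omega⟩).1, !(b.get ⟨n - 1 - i, by omega⟩).2) := by
    intro i hi
    have : (FreeGroup.invRev b).get ⟨i, by rwa [hlen]⟩ = b.get ⟨i, hi⟩ := by
      exact List.get_of_eq hb _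
    rw [← this]
    simp only [FreeGroup.invRev, List.get_eq_getElem]
    rw [List.getElem_reverse, List.getElem_map]
    congr 2 <;> simp [hnd]
  rcases Nat.even_or_odd n with he | ho
  · -- n even, positions n/2-1 and n/2 adjacent
    obtain ⟨k, hk⟩ := he
    have hk1 : 1 ≤ k := by omega
    have hadj := List.isChain_iff_getElem.mp hredb (k - 1) (by omega)
    have hkey := key k (by omega)
    have h1' : n - 1 - k = k - 1 := by omega
    have h2' : k - 1 + 1 = k := by omega
    have e1 : b.get ⟨n - 1 - k, by omega⟩ = b.get ⟨k - 1, by omega⟩ :=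
      congrArg b.get (Fin.ext (by simp [h1']))
    have e2 : b.get ⟨k - 1 + 1, by omega⟩ = b.get ⟨k, by omega⟩ :=
      congrArg b.get (Fin.ext (by simp [h2']))
    rw [e1] at hkey
    rw [List.get_eq_getElem, List.get_eq_getElem] at e2
    rw [e2] at hadj
    exact hadj ⟨(congrArg Prod.fst hkey).symm, congrArg Prod.snd hkey⟩
  · -- n odd, middle position
    obtain ⟨k, hk⟩ := ho
    have hkey := key k (by omega)
    have h1' : n - 1 - k = k := by omega
    have e1 : b.get ⟨n - 1 - k, by omega⟩ = b.get ⟨k, by omega⟩ :=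
      congrArg b.get (Fin.ext (by simp [h1']))
    rw [e1] at hkey
    have := congrArg Prod.snd hkey
    simp at this
end

section
/- Let w be a reduced word over an alphabet α and let γ be a nonempty word such that w = u ++ γ ++ v and w = u' ++ γ⁻¹ ++ v' for some words u, v, u', v'. Then the two occurrences are disjoint and not adjacent: either |u| + |γ| < |u'| or |u'| + |γ| < |u| (where |·| denotes the length of a word). -/
lemma getElem_idx_congr {α : Type*} (l : List α) {i j : ℕ} (h : i = j)
    (hi : i < l.length) : l[i] = l[j]'(h ▸ hi) := by subst h; rfl

lemma getElem_list_congr {α : Type*} {l l' : List α} (h : l = l') {i : ℕ}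
    (hi : i < l.length) : l[i] = l'[i]'(h ▸ hi) := by subst h; rfl

lemma getElem_mid {α : Type*} (u γ v : List α) (i : ℕ) (hi : i < γ.length)
    (h : u.length + i < (u ++ γ ++ v).length) :
    (u ++ γ ++ v)[u.length + i] = γ[i] := by
  rw [List.getElem_append_left (by simp; omega), List.getElem_append_right (by omega)]
  exact getElem_idx_congr γ (by omega) _

lemma getElem_invRev {α : Type*} (γ : List (α × Bool)) (j : ℕ)
    (h : j < (FreeGroup.invRev γ).length) (h' : γ.length - 1 - j < γ.length) :
    (FreeGroup.invRev γ)[j] = ((γ[γ.length - 1 - j]).1, !(γ[γ.length - 1 - j]).2) := by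
  simp only [FreeGroup.invRev]
  rw [List.getElem_reverse]
  simp

lemma reduced_getElem {α : Type*} {w : List (α × Bool)} (hred : Reduced w) (i : ℕ)
    (h : i + 1 < w.length) :
    ¬ ((w[i]).1 = (w[i+1]).1 ∧ (w[i+1]).2 = !(w[i]).2) := by
  rw [Reduced, List.Chain', List.isChain_iff_getElem] at hred
  simpa using hred i (by omega)

lemma occurrences_aux {α : Type*} (w γ u v u' v' : List (α × Bool))
    (hred : Reduced w) (hγ : γ ≠ [])
    (h1 : w = u ++ γ ++ v) (h2 : w = u' ++ FreeGroup.invRev γ ++ v')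
    (hle : u.length ≤ u'.length) : u.length + γ.length < u'.length := by
  by_contra hcon
  set n := γ.length with hn
  set a := u.length with ha
  set b := u'.length with hb
  have hn0 : 0 < n := List.length_pos_iff.mpr hγ
  have hd : b - a ≤ n := by omega
  set d := b - a with hdd
  have hba : b = a + d := by omega
  have hw1 : w.length = a + n + v.length := by simp [h1, ha, hn]; ring
  have hw2 : w.length = b + n + v'.length := by
    simp [h2, hb, FreeGroup.invRev_length, hn]; ring
  -- fact 1 : w[a+i] = γ[i] for i < n
  have f1 : ∀ i (hi : i < n), w[a + i]'(by omega) = γ[i] := by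
    intro i hi
    exact (getElem_list_congr h1 (by omega)).trans
      (getElem_mid u γ v i hi (by rw [← h1]; omega))
  -- fact 2 : w[b+j] = inverse of γ[n-1-j] for j < n
  have f2 : ∀ j (hj : j < n), w[b + j]'(by omega)
      = ((γ[n - 1 - j]'(by omega)).1, !(γ[n - 1 - j]'(by omega)).2) := by
    intro j hj
    have hj' : j < (FreeGroup.invRev γ).length := by rw [FreeGroup.invRev_length]; omega
    exact (getElem_list_congr h2 (by omega)).trans
      ((getElem_mid u' (FreeGroup.invRev γ) v' j hj' (by rw [← h2]; omega)).trans
        (getElem_invRev γ j hj' (by omega)))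
  rcases Nat.even_or_odd (n - d) with ⟨k, hk⟩ | ⟨k, hk⟩
  · -- n - d = 2k : contradiction via reducedness at position a + d + k - 1
    set m := d + k with hm
    have hm1 : 1 ≤ m := by omega
    have hmn : m ≤ n := by omega
    have hkn : k < n := by omega
    have e1 : w[a + m - 1]'(by omega) = γ[m - 1]'(by omega) :=
      (getElem_idx_congr w (by omega : a + m - 1 = a + (m - 1)) (by omega)).trans
        (f1 (m-1) (by omega))
    have e2 : w[a + m - 1 + 1]'(by omega)
        = ((γ[m - 1]'(by omega)).1, !(γ[m - 1]'(by omega)).2) := by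
      refine ((getElem_idx_congr w (by omega : a + m - 1 + 1 = b + k) (by omega)).trans
        (f2 k hkn)).trans ?_
      have : γ[n - 1 - k]'(by omega) = γ[m - 1]'(by omega) :=
        getElem_idx_congr γ (by omega) _
      rw [this]
    have hcontra := reduced_getElem hred (a + m - 1) (by omega)
    rw [e1, e2] at hcontra
    simp at hcontra
  · -- n - d = 2k + 1 : the middle letter equals its own inverse
    have hkn : d + k < n := by omega
    have e1 : w[a + (d + k)]'(by omega) = γ[d + k]'(by omega) := f1 (d+k) hkn
    have e2 := f2 k (by omega)
    have e3 : w[b + k]'(by omega) = w[a + (d + k)]'(by omega) :=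
      getElem_idx_congr w (by omega) _
    have e4 : γ[n - 1 - k]'(by omega) = γ[d + k]'(by omega) :=
      getElem_idx_congr γ (by omega) _
    rw [e3, e1, e4] at e2
    have := congrArg Prod.snd e2
    simp at this

/-- In a reduced word, an occurrence of a nonempty word `γ` and an occurrence of its
formal inverse `γ⁻¹` are disjoint and not adjacent. -/
theorem occurrences_of_inv_disjoint {α : Type*} (w γ u v u' v' : List (α × Bool))
    (hred : Reduced w) (hγ : γ ≠ [])
    (h1 : w = u ++ γ ++ v) (h2 : w = u' ++ FreeGroup.invRev γ ++ v') :
    u.length + γ.length < u'.length ∨ u'.length + γ.length < u.length := by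
  rcases le_or_gt u.length u'.length with h | h
  · exact Or.inl (occurrences_aux w γ u v u' v' hred hγ h1 h2 h)
  · right
    have hγ' : FreeGroup.invRev γ ≠ [] := by
      intro he
      have := congrArg List.length he
      rw [FreeGroup.invRev_length] at this
      exact hγ (List.length_eq_zero_iff.mp this)
    have := occurrences_aux w (FreeGroup.invRev γ) u' v' u v hred hγ' h2
      (by rw [FreeGroup.invRev_invRev]; exact h1) h.le
    rwa [FreeGroup.invRev_length] at this
end

section
/- Let G be a simple graph on a vertex type V that is a tree (connected with no cycles). Let n ≥ 2 and let A, B₁, …, Bₙ ⊆ V be sets of vertices, each inducing a connected subgraph of G, such that: A ∩ B₁ ≠ ∅, A ∩ Bₙ ≠ ∅, A ∩ Bᵢ = ∅ for all 1 < i < n, and Bᵢ ∩ Bᵢ₊₁ ≠ ∅ for all 1 ≤ i < n. Then B₁ ∩ Bₙ ≠ ∅. -/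
open SimpleGraph

lemma walk_in_connected_set {V : Type*} (G : SimpleGraph V) {S : Set V}
    (hS : (G.induce S).Connected) {u v : V} (hu : u ∈ S) (hv : v ∈ S) :
    ∃ w : G.Walk u v, ∀ t ∈ w.support, t ∈ S := by
  obtain ⟨w⟩ := hS ⟨u, hu⟩ ⟨v, hv⟩
  let f : G.induce S →g G := ⟨Subtype.val, fun h => h⟩
  refine ⟨w.map f, ?_⟩
  intro t ht
  rw [SimpleGraph.Walk.support_map, List.mem_map] at ht
  obtain ⟨s, _, rfl⟩ := ht
  exact s.2

-- L2: chain walk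
lemma chain_walk {V : Type*} (G : SimpleGraph V) (B : ℕ → Set V) (lo : ℕ) :
    ∀ k : ℕ, (∀ j, lo ≤ j → j ≤ lo + k → (G.induce (B j)).Connected) →
    (∀ j, lo ≤ j → j < lo + k → (B j ∩ B (j + 1)).Nonempty) →
    ∀ x z : V, x ∈ B lo → z ∈ B (lo + k) →
    ∃ w : G.Walk x z, ∀ t ∈ w.support, ∃ j, lo ≤ j ∧ j ≤ lo + k ∧ t ∈ B j := by
  intro k
  induction k with
  | zero =>
    intro hc _ x z hx hz
    obtain ⟨w, hw⟩ := walk_in_connected_set G (hc lo le_rfl (by omega)) hx hz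
    exact ⟨w, fun t ht => ⟨lo, le_rfl, by omega, hw t ht⟩⟩
  | succ k ih =>
    intro hc hi x z hx hz
    obtain ⟨m, hm1, hm2⟩ := hi (lo + k) (by omega) (by omega)
    obtain ⟨w1, hw1⟩ := ih (fun j h1 h2 => hc j h1 (by omega))
      (fun j h1 h2 => hi j h1 (by omega)) x m hx hm1
    obtain ⟨w2, hw2⟩ := walk_in_connected_set G (hc (lo + k + 1) (by omega) (by omega)) hm2 hz
    refine ⟨w1.append w2, ?_⟩
    intro t ht
    rw [SimpleGraph.Walk.mem_support_append_iff] at ht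
    rcases ht with ht | ht
    · obtain ⟨j, h1, h2, h3⟩ := hw1 t ht
      exact ⟨j, h1, by omega, h3⟩
    · exact ⟨lo + k + 1, by omega, by omega, hw2 t ht⟩

-- L3: find an S–T edge along a two-colored walk
lemma find_pair {V : Type*} {G : SimpleGraph V} {S T : Set V} :
    ∀ {a b : V} (w : G.Walk a b), a ∈ S → b ∈ T →
    (∀ t ∈ w.support, t ∈ S ∨ t ∈ T) →
    (S ∩ T).Nonempty ∨
      ∃ u v, G.Adj u v ∧ u ∈ S ∧ v ∈ T ∧ u ∈ w.support ∧ v ∈ w.support := by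
  intro a b w
  induction w with
  | nil => intro ha hb _; exact Or.inl ⟨_, ha, hb⟩
  | @cons a c b hac w ih =>
    intro ha hb hsup
    have hc : c ∈ S ∨ c ∈ T := hsup c (by simp)
    rcases hc with hc | hc
    · rcases ih hc hb (fun t ht => hsup t (by simp [ht])) with h | ⟨u, v, h1, h2, h3, h4, h5⟩
      · exact Or.inl h
      · exact Or.inr ⟨u, v, h1, h2, h3, by simp [h4], by simp [h5]⟩
    · exact Or.inr ⟨a, c, hac, ha, hc, by simp, by simp⟩

-- L4: in a tree, any walk between adjacent vertices uses the edge
lemma edge_mem_walk_of_isTree {V : Type*} {G : SimpleGraph V} (hG : G.IsTree)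
    {u v : V} (huv : G.Adj u v) (w : G.Walk u v) : s(u, v) ∈ w.edges := by
  by_contra h
  have hb : G.IsBridge s(u, v) :=
    (isAcyclic_iff_forall_adj_isBridge.mp hG.2) huv
  exact (isBridge_iff.mp hb) (reachable_delete_edges_iff_exists_walk.mpr ⟨w, h⟩)

/-- Abstract form of Lemma 4.7: in a tree, if a connected set `A` meets `B 1` and `B n`
but misses the intermediate sets of a chain `B 1, …, B n` of consecutively intersecting
connected sets, then `B 1` meets `B n`. -/
theorem tree_chain_intersection {V : Type*} (G : SimpleGraph V) (hG : G.IsTree)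
    (n : ℕ) (hn : 2 ≤ n) (A : Set V) (B : ℕ → Set V)
    (hA : (G.induce A).Connected)
    (hB : ∀ i, 1 ≤ i → i ≤ n → (G.induce (B i)).Connected)
    (h1 : (A ∩ B 1).Nonempty) (h2 : (A ∩ B n).Nonempty)
    (h3 : ∀ i, 1 < i → i < n → A ∩ B i = ∅)
    (h4 : ∀ i, 1 ≤ i → i < n → (B i ∩ B (i + 1)).Nonempty) :
    (B 1 ∩ B n).Nonempty := by
  rcases eq_or_lt_of_le hn with h | hn3
  · obtain ⟨x, hx⟩ := h4 1 le_rfl (by omega)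
    exact ⟨x, by rwa [← h]⟩
  -- n ≥ 3
  obtain ⟨a, haA, ha1⟩ := h1
  obtain ⟨b, hbA, hbn⟩ := h2
  -- walk from a to b inside A
  obtain ⟨wA, hwA⟩ := walk_in_connected_set G hA haA hbA
  -- walk from a to b inside the union of the B's
  have hb' : b ∈ B (1 + (n - 1)) := by rwa [show 1 + (n - 1) = n by omega]
  obtain ⟨wU, hwU⟩ := chain_walk G B 1 (n - 1)
    (fun j hj1 hj2 => hB j hj1 (by omega)) (fun j hj1 hj2 => h4 j hj1 (by omega))
    a b ha1 hb'
  -- the two paths coincide (unique paths in a tree)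
  classical
  obtain ⟨p0, _, hun⟩ := hG.existsUnique_path a b
  have e1 : (wA.toPath : G.Walk a b) = p0 := hun _ wA.toPath.2
  have e2 : (wU.toPath : G.Walk a b) = p0 := hun _ wU.toPath.2
  have hPA : ∀ t ∈ p0.support, t ∈ A := fun t ht =>
    hwA t (SimpleGraph.Walk.support_toPath_subset wA (by rw [e1]; exact ht))
  have hPB : ∀ t ∈ p0.support, t ∈ B 1 ∨ t ∈ B n := by
    intro t ht
    have ht' : t ∈ (wU.toPath : G.Walk a b).support := by rw [e2]; exact ht
    obtain ⟨j, hj1, hj2, hjB⟩ := hwU t (SimpleGraph.Walk.support_toPath_subset wU ht')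
    rcases eq_or_lt_of_le hj1 with h | h
    · exact Or.inl (h ▸ hjB)
    rcases eq_or_lt_of_le (show j ≤ n by omega) with h' | h'
    · exact Or.inr (h' ▸ hjB)
    · exact absurd (Set.mem_inter (hPA t ht) hjB) (by rw [h3 j h h']; exact Set.notMem_empty _)
  rcases find_pair p0 ha1 hbn hPB with h | ⟨u, v, huv, hu1, hvn, husup, hvsup⟩
  · exact h
  have huA : u ∈ A := hPA u husup
  have hvA : v ∈ A := hPA v hvsup
  -- build a walk from u to v through B1, middle sets, Bn
  obtain ⟨x, hx1, hx2⟩ := h4 1 le_rfl (by omega)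
  obtain ⟨y, hy1, hy2⟩ := h4 (n - 1) (by omega) (by omega)
  have hy2' : y ∈ B n := by rwa [show n - 1 + 1 = n by omega] at hy2
  obtain ⟨R1, hR1⟩ := walk_in_connected_set G (hB 1 le_rfl (by omega)) hu1 hx1
  have hy1' : y ∈ B (2 + (n - 3)) := by rwa [show 2 + (n - 3) = n - 1 by omega]
  obtain ⟨Q, hQ⟩ := chain_walk G B 2 (n - 3)
    (fun j hj1 hj2 => hB j (by omega) (by omega)) (fun j hj1 hj2 => h4 j (by omega) (by omega))
    x y hx2 hy1'
  obtain ⟨R2, hR2⟩ := walk_in_connected_set G (hB n (by omega) le_rfl) hy2' hvn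
  have he := edge_mem_walk_of_isTree hG huv (R1.append (Q.append R2))
  rw [SimpleGraph.Walk.edges_append, SimpleGraph.Walk.edges_append, List.mem_append,
    List.mem_append] at he
  rcases he with he | (he | he)
  · exact ⟨v, hR1 v (SimpleGraph.Walk.snd_mem_support_of_mem_edges R1 he), hvn⟩
  · obtain ⟨j, hj1, hj2, hjB⟩ := hQ u (SimpleGraph.Walk.fst_mem_support_of_mem_edges Q he)
    exact absurd (Set.mem_inter huA hjB)
      (by rw [h3 j (by omega) (by omega)]; exact Set.notMem_empty _)
  · exact ⟨u, hu1, hR2 u (SimpleGraph.Walk.fst_mem_support_of_mem_edges R2 he)⟩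
end

section
/- Let M be a metric space, I = [0,1] the unit interval, and a : I → M a continuous map that is not constant. Then there exist a continuous, nondecreasing, surjective map σ : I → I and a continuous map b : I → M such that a = b ∘ σ and b is not constant on any nondegenerate subinterval of I. -/
open Set Metric Topology Function

namespace MinFormAux

variable {M : Type*} [MetricSpace M]

noncomputable def g (a : unitInterval → M) (x : ℕ → unitInterval) (n : ℕ)
    (t : unitInterval) : ℝ :=
  Metric.diam (a '' Set.Icc (x n) t)

lemma g_nonneg (a : unitInterval → M) (x : ℕ → unitInterval) (n : ℕ) (t : unitInterval) :
    0 ≤ g a x n t := Metric.diam_nonneg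

lemma g_le (a : unitInterval → M) (hb : Bornology.IsBounded (Set.range a))
    (x : ℕ → unitInterval) (n : ℕ) (t : unitInterval) :
    g a x n t ≤ Metric.diam (Set.range a) :=
  Metric.diam_mono (Set.image_subset_range _ _) hb

lemma g_mono (a : unitInterval → M) (hb : Bornology.IsBounded (Set.range a))
    (x : ℕ → unitInterval) (n : ℕ) : Monotone (g a x n) := fun p q h =>
  Metric.diam_mono (Set.image_mono (Set.Icc_subset_Icc_right h))
    (hb.subset (Set.image_subset_range _ _))

lemma g_sub (a : unitInterval → M) (hb : Bornology.IsBounded (Set.range a))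
    (x : ℕ → unitInterval) (n : ℕ) {s t : unitInterval} (hst : s ≤ t) :
    g a x n t ≤ g a x n s + Metric.diam (a '' Set.Icc s t) := by
  rcases le_or_gt (x n) s with h | h
  · have hIcc : Set.Icc (x n) t = Set.Icc (x n) s ∪ Set.Icc s t :=
      (Set.Icc_union_Icc_eq_Icc h hst).symm
    simp only [g]
    rw [hIcc, Set.image_union]
    refine le_trans (Metric.diam_union (x := a s) (y := a s)
      ⟨s, ⟨h, le_rfl⟩, rfl⟩ ⟨s, ⟨le_rfl, hst⟩, rfl⟩) ?_
    rw [dist_self, add_zero]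
  · rcases le_or_gt (x n) t with h2 | h2
    · have h0 : g a x n s = 0 := by
        simp only [g]
        rw [Set.Icc_eq_empty (not_le.2 h), Set.image_empty, Metric.diam_empty]
      rw [h0, zero_add]
      exact Metric.diam_mono (Set.image_mono (Set.Icc_subset_Icc h.le le_rfl))
        (hb.subset (Set.image_subset_range _ _))
    · have h0 : g a x n t = 0 := by
        simp only [g]
        rw [Set.Icc_eq_empty (not_le.2 h2), Set.image_empty, Metric.diam_empty]
      rw [h0]
      exact add_nonneg (g_nonneg a x n s) Metric.diam_nonneg

lemma dist_g_le (a : unitInterval → M) (hb : Bornology.IsBounded (Set.range a))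
    (x : ℕ → unitInterval) (n : ℕ) {s t : unitInterval} (hst : s ≤ t) :
    dist (g a x n s) (g a x n t) ≤ Metric.diam (a '' Set.Icc s t) := by
  have h1 := g_sub a hb x n hst
  have h2 := g_mono a hb x n hst
  rw [Real.dist_eq, abs_sub_comm, abs_of_nonneg (sub_nonneg.2 h2)]
  linarith

lemma diam_img_le (a : unitInterval → M) (ha : Continuous a) {ε : ℝ} (hε : 0 < ε) :
    ∃ δ > 0, ∀ s t : unitInterval, dist s t < δ →
      Metric.diam (a '' Set.Icc s t) ≤ ε := by
  obtain ⟨δ, hδ, hδ'⟩ := Metric.uniformContinuous_iff.mp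
    (CompactSpace.uniformContinuous_of_continuous ha) ε hε
  refine ⟨δ, hδ, fun s t hst => ?_⟩
  refine Metric.diam_le_of_forall_dist_le hε.le ?_
  rintro y ⟨u, hu, rfl⟩ z ⟨v, hv, rfl⟩
  refine le_of_lt (hδ' ?_)
  have h1 : (s : ℝ) ≤ u := hu.1
  have h2 : (u : ℝ) ≤ t := hu.2
  have h3 : (s : ℝ) ≤ v := hv.1
  have h4 : (v : ℝ) ≤ t := hv.2
  have hst' : |(s : ℝ) - t| < δ := by
    rw [Subtype.dist_eq, Real.dist_eq] at hst; exact hst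
  rw [Subtype.dist_eq, Real.dist_eq]
  rw [abs_sub_lt_iff] at hst' ⊢
  constructor <;> linarith [hst'.1, hst'.2]

lemma g_cont (a : unitInterval → M) (ha : Continuous a)
    (hb : Bornology.IsBounded (Set.range a))
    (x : ℕ → unitInterval) (n : ℕ) : Continuous (g a x n) := by
  rw [Metric.continuous_iff]
  intro t ε hε
  obtain ⟨δ, hδ, hδ'⟩ := diam_img_le a ha (half_pos hε)
  refine ⟨δ, hδ, fun s hs => ?_⟩
  have : dist (g a x n s) (g a x n t) ≤ ε / 2 := by
    rcases le_total s t with h | h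
    · exact le_trans (dist_g_le a hb x n h) (hδ' s t hs)
    · rw [dist_comm]
      exact le_trans (dist_g_le a hb x n h) (hδ' t s (by rwa [dist_comm]))
  linarith

noncomputable def S (a : unitInterval → M) (x : ℕ → unitInterval) (t : unitInterval) : ℝ :=
  ∑' n : ℕ, (1 / 2 : ℝ) ^ n * g a x n t

lemma summable_S (a : unitInterval → M) (hb : Bornology.IsBounded (Set.range a))
    (x : ℕ → unitInterval) (t : unitInterval) :
    Summable fun n : ℕ => (1 / 2 : ℝ) ^ n * g a x n t := by
  refine Summable.of_nonneg_of_le (fun n => ?_) (fun n => ?_)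
    (summable_geometric_two.mul_right (Metric.diam (Set.range a)))
  · exact mul_nonneg (by positivity) (g_nonneg a x n t)
  · exact mul_le_mul_of_nonneg_left (g_le a hb x n t) (by positivity)

lemma S_mono (a : unitInterval → M) (hb : Bornology.IsBounded (Set.range a))
    (x : ℕ → unitInterval) : Monotone (S a x) := by
  intro p q h
  refine Summable.tsum_le_tsum (fun n => ?_) (summable_S a hb x p) (summable_S a hb x q)
  exact mul_le_mul_of_nonneg_left (g_mono a hb x n h) (by positivity)

lemma S_cont (a : unitInterval → M) (ha : Continuous a)
    (hb : Bornology.IsBounded (Set.range a)) (x : ℕ → unitInterval) :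
    Continuous (S a x) := by
  refine continuous_tsum (fun n => ?_)
    (summable_geometric_two.mul_right (Metric.diam (Set.range a))) (fun n t => ?_)
  · exact (continuous_const.mul (g_cont a ha hb x n))
  · rw [Real.norm_eq_abs, abs_of_nonneg (mul_nonneg (by positivity) (g_nonneg a x n t))]
    exact mul_le_mul_of_nonneg_left (g_le a hb x n t) (by positivity)

lemma S_eq_of_const (a : unitInterval → M) (x : ℕ → unitInterval)
    {s t : unitInterval} (hst : s ≤ t) (hc : ∀ u ∈ Set.Icc s t, a u = a s) :
    S a x s = S a x t := by
  refine tsum_congr fun n => ?_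
  congr 1
  rcases le_or_gt (x n) s with h | h
  · have himg : a '' Set.Icc (x n) t = a '' Set.Icc (x n) s := by
      apply Set.Subset.antisymm
      · rintro y ⟨w, hw, rfl⟩
        rcases le_total w s with h1 | h1
        · exact ⟨w, ⟨hw.1, h1⟩, rfl⟩
        · exact ⟨s, ⟨h, le_rfl⟩, (hc w ⟨h1, hw.2⟩).symm⟩
      · exact Set.image_mono (Set.Icc_subset_Icc_right hst)
    simp only [g]
    rw [himg]
  · have h1 : g a x n s = 0 := by
      simp only [g]
      rw [Set.Icc_eq_empty (not_le.2 h), Set.image_empty, Metric.diam_empty]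
    have h2 : g a x n t = 0 := by
      refine Metric.diam_subsingleton ?_
      rintro y ⟨w, hw, rfl⟩ z ⟨w', hw', rfl⟩
      rw [hc w ⟨h.le.trans hw.1, hw.2⟩, hc w' ⟨h.le.trans hw'.1, hw'.2⟩]
    rw [h1, h2]

lemma S_lt_of_not_const (a : unitInterval → M) (ha : Continuous a)
    (hb : Bornology.IsBounded (Set.range a))
    (x : ℕ → unitInterval) (hxd : DenseRange x)
    {s t : unitInterval} (hst : s ≤ t) (hc : ¬ ∀ u ∈ Set.Icc s t, a u = a s) :
    S a x s < S a x t := by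
  push_neg at hc
  obtain ⟨u, hu, hau⟩ := hc
  have hsu : s < u := lt_of_le_of_ne hu.1 (fun h => hau (by rw [← h]))
  have hε : 0 < dist (a s) (a u) := dist_pos.2 (Ne.symm hau)
  obtain ⟨δ, hδpos, hδ⟩ := Metric.continuous_iff.mp ha s _ hε
  -- find a dense point strictly between s and u, within δ of s
  have hO : IsOpen ((Set.Ioi s ∩ Set.Iio u) ∩ Metric.ball s δ) :=
    (isOpen_Ioi.inter isOpen_Iio).inter Metric.isOpen_ball
  have hne : ((Set.Ioi s ∩ Set.Iio u) ∩ Metric.ball s δ).Nonempty := by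
    obtain ⟨w0, hw1, hw2⟩ := exists_between (lt_min (Subtype.coe_lt_coe.2 hsu)
      (lt_add_of_pos_right (s : ℝ) hδpos))
    have hw2u : w0 < (u : ℝ) := lt_of_lt_of_le hw2 (min_le_left _ _)
    have hw2d : w0 < (s : ℝ) + δ := lt_of_lt_of_le hw2 (min_le_right _ _)
    refine ⟨⟨w0, ⟨s.2.1.trans hw1.le, hw2u.le.trans u.2.2⟩⟩, ⟨⟨?_, ?_⟩, ?_⟩⟩
    · exact_mod_cast hw1
    · exact_mod_cast hw2u
    · rw [Metric.mem_ball, Subtype.dist_eq, Real.dist_eq, abs_sub_lt_iff]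
      constructor <;> simp only [] <;> linarith
  obtain ⟨n, hn⟩ := hxd.exists_mem_open hO hne
  obtain ⟨⟨hn1, hn2⟩, hn3⟩ := hn
  have hgs : g a x n s = 0 := by
    simp only [g]
    rw [Set.Icc_eq_empty (not_le.2 hn1), Set.image_empty, Metric.diam_empty]
  have hgt : 0 < g a x n t := by
    have hxt : x n ≤ t := (le_of_lt hn2).trans hu.2
    have hdxu : dist (a (x n)) (a s) < dist (a s) (a u) := hδ _ hn3
    have htri := dist_triangle (a s) (a (x n)) (a u)
    have hd : 0 < dist (a (x n)) (a u) := by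
      rw [dist_comm (a s) (a (x n))] at htri
      linarith
    have hle : dist (a (x n)) (a u) ≤ g a x n t :=
      Metric.dist_le_diam_of_mem (hb.subset (Set.image_subset_range _ _))
        ⟨x n, ⟨le_rfl, hxt⟩, rfl⟩ ⟨u, ⟨hn2.le, hu.2⟩, rfl⟩
    linarith
  refine Summable.tsum_lt_tsum (i := n) (fun m => ?_) ?_ (summable_S a hb x s) (summable_S a hb x t)
  · exact mul_le_mul_of_nonneg_left (g_mono a hb x m hst) (by positivity)
  · rw [hgs]
    exact mul_lt_mul_of_pos_left hgt (by positivity)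

end MinFormAux

open MinFormAux

/-- Existence of the minimal form of a non-constant path: every non-constant continuous
map `a : [0,1] → M` factors as `a = b ∘ σ` with `σ : [0,1] → [0,1]` continuous,
nondecreasing and surjective, and `b` continuous and not constant on any nondegenerate
subinterval. -/
theorem exists_minimal_form {M : Type*} [MetricSpace M] (a : unitInterval → M)
    (ha : Continuous a) (hnc : ¬ ∀ s t : unitInterval, a s = a t) :
    ∃ (σ : unitInterval → unitInterval) (b : unitInterval → M),
      Continuous σ ∧ Monotone σ ∧ Function.Surjective σ ∧ Continuous b ∧
      a = b ∘ σ ∧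
      ∀ s t : unitInterval, s < t → ¬ ∀ u ∈ Set.Icc s t, b u = b s := by
  push_neg at hnc
  obtain ⟨u₀, v₀, huv⟩ := hnc
  have hb : Bornology.IsBounded (Set.range a) := (isCompact_range ha).isBounded
  set x : ℕ → unitInterval := TopologicalSpace.denseSeq unitInterval with hxdef
  have hxd : DenseRange x := TopologicalSpace.denseRange_denseSeq unitInterval
  -- const_of_S_eq
  have hconst_of_eq : ∀ {p q : unitInterval}, p ≤ q → S a x p = S a x q →
      ∀ u ∈ Set.Icc p q, a u = a p := by
    intro p q hpq heq
    by_contra hc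
    exact absurd heq (ne_of_lt (S_lt_of_not_const a ha hb x hxd hpq hc))
  have ha_of_eq : ∀ p q : unitInterval, S a x p = S a x q → a p = a q := by
    intro p q heq
    rcases le_total p q with h | h
    · exact (hconst_of_eq h heq q ⟨h, le_rfl⟩).symm
    · exact hconst_of_eq h heq.symm p ⟨h, le_rfl⟩
  -- D > 0
  have hmem01 : ∀ w : unitInterval, w ∈ Set.Icc (0 : unitInterval) 1 :=
    fun w => ⟨unitInterval.nonneg' , unitInterval.le_one'⟩
  have hD : 0 < S a x 1 - S a x 0 := by
    rw [sub_pos]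
    refine S_lt_of_not_const a ha hb x hxd unitInterval.nonneg' ?_
    intro hc
    exact huv (by rw [hc u₀ (hmem01 u₀), hc v₀ (hmem01 v₀)])
  set D : ℝ := S a x 1 - S a x 0 with hDdef
  set σ : unitInterval → unitInterval :=
    fun t => Set.projIcc (0 : ℝ) 1 zero_le_one ((S a x t - S a x 0) / D) with hσdef
  have hmem : ∀ t : unitInterval, (S a x t - S a x 0) / D ∈ Set.Icc (0 : ℝ) 1 := by
    intro t
    constructor
    · exact div_nonneg (sub_nonneg.2 (S_mono a hb x unitInterval.nonneg')) hD.le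
    · rw [div_le_one hD]
      exact sub_le_sub_right (S_mono a hb x unitInterval.le_one') _
  have hσval : ∀ t : unitInterval, (σ t : ℝ) = (S a x t - S a x 0) / D := by
    intro t
    rw [hσdef]
    simp only []
    rw [Set.projIcc_of_mem _ (hmem t)]
  have hσc : Continuous σ := by
    apply continuous_projIcc.comp
    exact ((S_cont a ha hb x).sub continuous_const).div_const D
  have hσm : Monotone σ := by
    intro p q h
    apply monotone_projIcc
    exact div_le_div_of_nonneg_right (sub_le_sub_right (S_mono a hb x h) _) hD.le
  have hσ0 : σ 0 = 0 := by
    apply Subtype.ext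
    rw [hσval 0]
    simp
  have hσ1 : σ 1 = 1 := by
    apply Subtype.ext
    rw [hσval 1]
    simp [hDdef, div_self hD.ne']
    exact hD.ne'
  have hσs : Function.Surjective σ := by
    intro y
    have h := intermediate_value_univ (0 : unitInterval) 1 hσc
    rw [hσ0, hσ1] at h
    exact h (hmem01 y)
  -- S equal when σ equal
  have hSeq_of_σ : ∀ p q : unitInterval, σ p = σ q → S a x p = S a x q := by
    intro p q h
    have h' : (σ p : ℝ) = (σ q : ℝ) := congrArg Subtype.val h
    rw [hσval p, hσval q, div_eq_div_iff hD.ne' hD.ne'] at h'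
    have := mul_right_cancel₀ hD.ne' h'
    linarith
  have hfac : ∀ p q : unitInterval, σ p = σ q → a p = a q :=
    fun p q h => ha_of_eq p q (hSeq_of_σ p q h)
  set τ : unitInterval → unitInterval := Function.surjInv hσs with hτdef
  have hτ : ∀ y, σ (τ y) = y := fun y => Function.surjInv_eq hσs y
  set b : unitInterval → M := a ∘ τ with hbdef
  have hbσ : b ∘ σ = a := by
    funext p
    exact hfac _ _ (hτ (σ p))
  have hbc : Continuous b := by
    rw [(IsQuotientMap.of_surjective_continuous hσs hσc).continuous_iff]
    rw [hbσ]
    exact ha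
  refine ⟨σ, b, hσc, hσm, hσs, hbc, hbσ.symm, ?_⟩
  intro s t hst hcb
  have hps : σ (τ s) = s := hτ s
  have hqt : σ (τ t) = t := hτ t
  have hpq : τ s ≤ τ t := by
    by_contra h
    push_neg at h
    have := hσm h.le
    rw [hps, hqt] at this
    exact absurd hst (not_lt.2 this)
  have hca : ∀ w ∈ Set.Icc (τ s) (τ t), a w = a (τ s) := by
    intro w hw
    have h1 : σ w ∈ Set.Icc s t := ⟨hps ▸ hσm hw.1, hqt ▸ hσm hw.2⟩
    calc a w = b (σ w) := (congrFun hbσ w).symm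
      _ = b s := hcb (σ w) h1
      _ = b (σ (τ s)) := by rw [hps]
      _ = a (τ s) := congrFun hbσ (τ s)
  have hSeq : S a x (τ s) = S a x (τ t) := S_eq_of_const a x hpq hca
  have hstt : s = t := by
    rw [← hps, ← hqt]
    apply Subtype.ext
    rw [hσval, hσval, hSeq]
  exact absurd hstt hst.ne
end

section
/- Let M be a metric space and I = [0,1]. Let a, b : I → M be continuous maps, neither of which is constant on any nondegenerate subinterval of I. Suppose there exist continuous, nondecreasing, surjective maps σ, τ : I → I such that a ∘ σ = b ∘ τ. Then there exists a strictly increasing homeomorphism h : I → I such that a = b ∘ h. -/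
/-- Key lemma: if `a ∘ σ = b ∘ τ` with `σ` monotone, `τ` continuous monotone, and `b`
is not constant on any nondegenerate subinterval, then `σ x = σ x'` forces `τ x = τ x'`. -/
lemma minimal_forms_unique_key {M : Type*} [MetricSpace M] (a b : unitInterval → M)
    (hmb : ∀ s t : unitInterval, s < t → ¬ ∀ u ∈ Set.Icc s t, b u = b s)
    (σ τ : unitInterval → unitInterval) (hσm : Monotone σ)
    (hτc : Continuous τ) (hτm : Monotone τ)
    (heq : a ∘ σ = b ∘ τ) :
    ∀ x x' : unitInterval, σ x = σ x' → τ x = τ x' := by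
  have main : ∀ x x' : unitInterval, x ≤ x' → σ x = σ x' → τ x = τ x' := by
    intro x x' hxx hs
    by_contra hne
    have hlt : τ x < τ x' := lt_of_le_of_ne (hτm hxx) hne
    refine hmb (τ x) (τ x') hlt ?_
    have hsub : Subtype.val '' (Set.Icc x x') = Set.Icc (x : ℝ) (x' : ℝ) := by
      ext r
      constructor
      · rintro ⟨y, ⟨h1, h2⟩, rfl⟩
        exact ⟨h1, h2⟩
      · rintro ⟨h1, h2⟩
        have hr : r ∈ unitInterval := ⟨le_trans x.2.1 h1, le_trans h2 x'.2.2⟩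
        exact ⟨⟨r, hr⟩, ⟨h1, h2⟩, rfl⟩
    have hpre : IsPreconnected (Set.Icc x x' : Set unitInterval) :=
      Topology.IsInducing.subtypeVal.isPreconnected_image.mp (hsub ▸ isPreconnected_Icc)
    have hIVT := hpre.intermediate_value (Set.left_mem_Icc.mpr hxx)
      (Set.right_mem_Icc.mpr hxx)
      (Continuous.continuousOn (continuous_subtype_val.comp hτc))
    intro u hu
    have hu' : (u : ℝ) ∈ Set.Icc ((τ x : unitInterval) : ℝ) ((τ x' : unitInterval) : ℝ) :=
      ⟨hu.1, hu.2⟩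
    obtain ⟨y, hy, hty⟩ := hIVT hu'
    have hyu : τ y = u := Subtype.ext hty
    have hσy : σ y = σ x := le_antisymm (hs ▸ hσm hy.2) (hσm hy.1)
    have h1 : a (σ y) = b (τ y) := congrFun heq y
    have h2 : a (σ x) = b (τ x) := congrFun heq x
    rw [← hyu, ← h1, hσy, h2]
  intro x x' hs
  rcases le_total x x' with h | h
  · exact main x x' h hs
  · exact (main x' x h hs.symm).symm

/-- Uniqueness of minimal forms: if two paths in minimal form (not constant on any
nondegenerate subinterval) admit continuous nondecreasing surjective reparametrizations
making them equal, then they differ by a strictly increasing homeomorphism of `[0,1]`. -/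
theorem minimal_forms_unique {M : Type*} [MetricSpace M] (a b : unitInterval → M)
    (ha : Continuous a) (hb : Continuous b)
    (hma : ∀ s t : unitInterval, s < t → ¬ ∀ u ∈ Set.Icc s t, a u = a s)
    (hmb : ∀ s t : unitInterval, s < t → ¬ ∀ u ∈ Set.Icc s t, b u = b s)
    (σ τ : unitInterval → unitInterval)
    (hσc : Continuous σ) (hσm : Monotone σ) (hσs : Function.Surjective σ)
    (hτc : Continuous τ) (hτm : Monotone τ) (hτs : Function.Surjective τ)
    (heq : a ∘ σ = b ∘ τ) :
    ∃ h : unitInterval ≃ₜ unitInterval, StrictMono ⇑h ∧ a = b ∘ ⇑h := by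
  have key1 := minimal_forms_unique_key a b hmb σ τ hσm hτc hτm heq
  have key2 := minimal_forms_unique_key b a hma τ σ hτm hσc hσm heq.symm
  set h0 : unitInterval → unitInterval := fun s => τ (hσs s).choose with hh0
  set g0 : unitInterval → unitInterval := fun t => σ (hτs t).choose with hg0
  have hcomp : ∀ x, h0 (σ x) = τ x := fun x => key1 _ x (hσs (σ x)).choose_spec
  have gcomp : ∀ y, g0 (τ y) = σ y := fun y => key2 _ y (hτs (τ y)).choose_spec
  have hleft : ∀ s, g0 (h0 s) = s := by
    intro s
    have := gcomp (hσs s).choose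
    rw [hh0, this, (hσs s).choose_spec]
  have hsurj : Function.Surjective h0 := by
    intro t
    refine ⟨σ (hτs t).choose, ?_⟩
    rw [hcomp, (hτs t).choose_spec]
  have hmono : Monotone h0 := by
    intro s s' hss
    rcases le_total (hσs s).choose (hσs s').choose with h | h
    · exact hτm h
    · have : σ (hσs s).choose = σ (hσs s').choose := by
        rw [(hσs s).choose_spec, (hσs s').choose_spec]
        exact le_antisymm hss ((hσs s).choose_spec ▸ (hσs s').choose_spec ▸ hσm h)
      exact le_of_eq (key1 _ _ this)
  have hinj : Function.Injective h0 := Function.LeftInverse.injective hleft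
  have hsm : StrictMono h0 := hmono.strictMono_of_injective hinj
  let e : unitInterval ≃o unitInterval := StrictMono.orderIsoOfSurjective h0 hsm hsurj
  refine ⟨e.toHomeomorph, ?_, ?_⟩
  · exact hsm
  · funext s
    have h1 : a (σ (hσs s).choose) = b (τ (hσs s).choose) := congrFun heq _
    have h2 := (hσs s).choose_spec
    simp only [Function.comp_apply]
    have : (e.toHomeomorph : unitInterval → unitInterval) s = h0 s := rfl
    rw [this, ← h2, hcomp, ← h1]
end
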